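/- Let r > 0, c > 1 and R > 0 with c·r < π·sinh(R). Set p₁ = 1 − r/(π·sinh(R)) and p₂ = 1 − c·r/(π·sinh(R)). Then 0 < p₂ < p₁ < 1, and there exist a probability measure μ on ℝ × ℝ and a function H : ℝ × ℝ → (ℂ → Bool) such that for all points u, v of the open unit disk with d_D(0,u) ≤ R and d_D(0,v) ≤ R: (i) if d_D(u,v) ≤ r then μ{ω : H(ω)(u) = H(ω)(v)} ≥ p₁; (ii) if d_D(u,v) ≥ c·r then μ{ω : H(ω)(u) = H(ω)(v)} ≤ p₂; moreover log(1/p₁)/log(1/p₂) ≤ 1/c. -/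

import Mathlib

open Real MeasureTheory

/-- The inverse hyperbolic cosine. -/
noncomputable def arcosh (x : ℝ) : ℝ := Real.log (x + Real.sqrt (x ^ 2 - 1))

/-- The hyperbolic distance between two points of the Poincaré disk. -/
noncomputable def poincareDist (u v : ℂ) : ℝ :=
  _root_.arcosh (1 + 2 * ‖u - v‖ ^ 2 /
    ((1 - ‖u‖ ^ 2) * (1 - ‖v‖ ^ 2)))

/-- sinh of the signed distance from `u` to the diameter in direction `θ`...
actually: the integrand of the Crofton formula. -/
noncomputable def Sf (u : ℂ) (θ : ℝ) : ℝ :=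
  2 * (u.re * Real.cos θ + u.im * Real.sin θ) /
    Real.sqrt ((1 - ‖u‖ ^ 2) ^ 2 + 4 * (u.im * Real.cos θ - u.re * Real.sin θ) ^ 2)

noncomputable def Tf (u : ℂ) (θ : ℝ) : ℝ :=
  Real.arsinh (2 * (u.re * Real.sin θ - u.im * Real.cos θ) / (1 - ‖u‖ ^ 2))

lemma sqabs (z : ℂ) : ‖z‖ ^ 2 = z.re ^ 2 + z.im ^ 2 := by
  rw [Complex.sq_norm, Complex.normSq_apply]; ring

lemma q_lt_one {u : ℂ} (hu : ‖u‖ < 1) : ‖u‖ ^ 2 < 1 := by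
  have h0 : (0:ℝ) ≤ ‖u‖ := norm_nonneg u
  nlinarith

lemma Sf_den_pos {u : ℂ} (hu : ‖u‖ < 1) (θ : ℝ) :
    0 < (1 - ‖u‖ ^ 2) ^ 2 + 4 * (u.im * Real.cos θ - u.re * Real.sin θ) ^ 2 := by
  have h := q_lt_one hu
  nlinarith [sq_nonneg (u.im * Real.cos θ - u.re * Real.sin θ)]

lemma continuous_Sf {u : ℂ} (hu : ‖u‖ < 1) : Continuous (Sf u) := by
  apply Continuous.div
  · fun_prop
  · fun_prop
  · intro θ
    exact ne_of_gt (Real.sqrt_pos.mpr (Sf_den_pos hu θ))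

lemma hasDerivAt_Tf {u : ℂ} (hu : ‖u‖ < 1) (θ : ℝ) :
    HasDerivAt (Tf u) (Sf u θ) θ := by
  have hq := q_lt_one hu
  set q := ‖u‖ ^ 2 with hqdef
  have hq1 : (0:ℝ) < 1 - q := by linarith
  have hg : HasDerivAt (fun θ => 2 * (u.re * Real.sin θ - u.im * Real.cos θ) / (1 - q))
      (2 * (u.re * Real.cos θ + u.im * Real.sin θ) / (1 - q)) θ := by
    have h1 : HasDerivAt (fun θ => 2 * (u.re * Real.sin θ - u.im * Real.cos θ))
        (2 * (u.re * Real.cos θ + u.im * Real.sin θ)) θ := by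
      have := (((Real.hasDerivAt_sin θ).const_mul u.re).sub
        ((Real.hasDerivAt_cos θ).const_mul u.im)).const_mul (2:ℝ)
      exact this.congr_deriv (by ring)
    exact h1.div_const _
  have harc := (Real.hasDerivAt_arsinh (2 * (u.re * Real.sin θ - u.im * Real.cos θ) / (1 - q))).comp θ hg
  refine harc.congr_deriv ?_
  set g := 2 * (u.re * Real.sin θ - u.im * Real.cos θ) / (1 - q) with hgdef
  have h2 : 1 + g ^ 2 =
        ((1 - q) ^ 2 + 4 * (u.im * Real.cos θ - u.re * Real.sin θ) ^ 2) / (1 - q) ^ 2 := by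
    rw [hgdef]; field_simp; ring
  have h3 : Real.sqrt (1 + g ^ 2) =
        Real.sqrt ((1 - q) ^ 2 + 4 * (u.im * Real.cos θ - u.re * Real.sin θ) ^ 2) / (1 - q) := by
    rw [h2, Real.sqrt_div (by positivity), Real.sqrt_sq hq1.le]
  rw [Sf, h3, ← hqdef]
  have hNpos : 0 < Real.sqrt ((1 - q) ^ 2 + 4 * (u.im * Real.cos θ - u.re * Real.sin θ) ^ 2) :=
    Real.sqrt_pos.mpr (Sf_den_pos hu θ)
  field_simp

lemma Gmono {t s : ℝ} (ht : 4 * t ^ 2 < 1) (hs : 4 * s ^ 2 < 1) (hts : t ≤ s) :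
    2 * t / Real.sqrt (1 - 4 * t ^ 2) ≤ 2 * s / Real.sqrt (1 - 4 * s ^ 2) := by
  have hT : 0 < Real.sqrt (1 - 4 * t ^ 2) := Real.sqrt_pos.mpr (by linarith)
  have hS : 0 < Real.sqrt (1 - 4 * s ^ 2) := Real.sqrt_pos.mpr (by linarith)
  rw [div_le_div_iff₀ hT hS]
  rcases le_or_gt t 0 with h1 | h1
  · rcases le_or_gt 0 s with h2 | h2
    · have l1 : 2 * t * Real.sqrt (1 - 4 * s ^ 2) ≤ 0 :=
        mul_nonpos_of_nonpos_of_nonneg (by linarith) hS.le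
      have l2 : 0 ≤ 2 * s * Real.sqrt (1 - 4 * t ^ 2) :=
        mul_nonneg (by linarith) hT.le
      linarith
    · -- t ≤ s < 0
      have e1 : 2 * (-s) * Real.sqrt (1 - 4 * t ^ 2)
          = Real.sqrt ((2 * (-s)) ^ 2 * (1 - 4 * t ^ 2)) := by
        rw [Real.sqrt_mul (by positivity), Real.sqrt_sq (by linarith)]
      have e2 : 2 * (-t) * Real.sqrt (1 - 4 * s ^ 2)
          = Real.sqrt ((2 * (-t)) ^ 2 * (1 - 4 * s ^ 2)) := by
        rw [Real.sqrt_mul (by positivity), Real.sqrt_sq (by linarith)]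
      have key : Real.sqrt ((2 * (-s)) ^ 2 * (1 - 4 * t ^ 2))
          ≤ Real.sqrt ((2 * (-t)) ^ 2 * (1 - 4 * s ^ 2)) := by
        apply Real.sqrt_le_sqrt; nlinarith
      rw [← e1, ← e2] at key
      linarith
  · -- 0 < t ≤ s
    have e1 : 2 * t * Real.sqrt (1 - 4 * s ^ 2)
        = Real.sqrt ((2 * t) ^ 2 * (1 - 4 * s ^ 2)) := by
      rw [Real.sqrt_mul (by positivity), Real.sqrt_sq (by linarith)]
    have e2 : 2 * s * Real.sqrt (1 - 4 * t ^ 2)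
        = Real.sqrt ((2 * s) ^ 2 * (1 - 4 * t ^ 2)) := by
      rw [Real.sqrt_mul (by positivity), Real.sqrt_sq (by linarith)]
    rw [e1, e2]
    apply Real.sqrt_le_sqrt; nlinarith

lemma pyth (u : ℂ) (θ : ℝ) :
    (u.re * Real.cos θ + u.im * Real.sin θ) ^ 2 + (u.im * Real.cos θ - u.re * Real.sin θ) ^ 2
      = ‖u‖ ^ 2 := by
  linear_combination (u.re ^ 2 + u.im ^ 2) * Real.sin_sq_add_cos_sq θ - sqabs u

lemma mu_sq_lt {u : ℂ} (hu : ‖u‖ < 1) (θ : ℝ) :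
    4 * ((u.re * Real.cos θ + u.im * Real.sin θ) / (1 + ‖u‖ ^ 2)) ^ 2 < 1 := by
  have hq := q_lt_one hu
  have hq0 : (0:ℝ) ≤ ‖u‖ ^ 2 := by positivity
  have hp := pyth u θ
  have h1 : (u.re * Real.cos θ + u.im * Real.sin θ) ^ 2 ≤ ‖u‖ ^ 2 := by
    nlinarith [sq_nonneg (u.im * Real.cos θ - u.re * Real.sin θ)]
  rw [div_pow, mul_comm, div_mul_eq_mul_div, div_lt_one (by positivity)]
  nlinarith

lemma Sf_eq_G {u : ℂ} (hu : ‖u‖ < 1) (θ : ℝ) :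
    Sf u θ = 2 * ((u.re * Real.cos θ + u.im * Real.sin θ) / (1 + ‖u‖ ^ 2)) /
      Real.sqrt (1 - 4 * ((u.re * Real.cos θ + u.im * Real.sin θ) / (1 + ‖u‖ ^ 2)) ^ 2) := by
  have hq := q_lt_one hu
  have hq0 : (0:ℝ) ≤ ‖u‖ ^ 2 := by positivity
  set q := ‖u‖ ^ 2
  set x := u.re * Real.cos θ + u.im * Real.sin θ with hx
  set y := u.im * Real.cos θ - u.re * Real.sin θ with hy
  have hp : x ^ 2 + y ^ 2 = q := pyth u θ
  have h1q : (0:ℝ) < 1 + q := by linarith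
  have hden : (1 - q) ^ 2 + 4 * y ^ 2 = (1 + q) ^ 2 * (1 - 4 * (x / (1 + q)) ^ 2) := by
    field_simp
    linear_combination (4 : ℝ) * hp
  rw [Sf, ← hx, ← hy, hden, Real.sqrt_mul (by positivity), Real.sqrt_sq h1q.le]
  have hs0 : (0:ℝ) ≤ 1 - 4 * (x / (1 + q)) ^ 2 := le_of_lt (by

    have := mu_sq_lt hu θ; rw [← hx] at this; linarith)
  rcases eq_or_lt_of_le hs0 with h | h
  · rw [← h, Real.sqrt_zero]; simp
  · have hsq : 0 < Real.sqrt (1 - 4 * (x / (1 + q)) ^ 2) := Real.sqrt_pos.mpr h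
    field_simp

lemma Sf_le_Sf {u v : ℂ} (hu : ‖u‖ < 1) (hv : ‖v‖ < 1) (θ : ℝ)
    (h : 0 ≤ (u.re * (1 + ‖v‖ ^ 2) - v.re * (1 + ‖u‖ ^ 2)) * Real.cos θ
        + (u.im * (1 + ‖v‖ ^ 2) - v.im * (1 + ‖u‖ ^ 2)) * Real.sin θ) :
    Sf v θ ≤ Sf u θ := by
  have hqu := q_lt_one hu
  have hqv := q_lt_one hv
  have hqu0 : (0:ℝ) ≤ ‖u‖ ^ 2 := by positivity
  have hqv0 : (0:ℝ) ≤ ‖v‖ ^ 2 := by positivity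
  rw [Sf_eq_G hu, Sf_eq_G hv]
  apply Gmono (mu_sq_lt hv θ) (mu_sq_lt hu θ)
  rw [div_le_div_iff₀ (by linarith) (by linarith)]
  nlinarith

set_option maxHeartbeats 2000000 in
lemma arcosh_cosh {y : ℝ} (hy : 0 ≤ y) : _root_.arcosh (Real.cosh y) = y := by
  unfold _root_.arcosh
  have h1 : Real.cosh y ^ 2 - 1 = Real.sinh y ^ 2 := by
    have := Real.cosh_sq y; linarith
  have hs : 0 ≤ Real.sinh y := by
    rw [← Real.sinh_zero]; exact Real.sinh_le_sinh.mpr hy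
  rw [h1, Real.sqrt_sq hs, Real.cosh_add_sinh, Real.log_exp]

set_option maxHeartbeats 2000000 in
lemma main_alg (qu qv k m ρ A B a b X : ℝ)
    (hqu1 : qu < 1) (hqv1 : qv < 1) (hqu0 : 0 ≤ qu) (hqv0 : 0 ≤ qv) (hρ : 0 < ρ)
    (hm : m = qu + qv - 2 * k) (hm0 : 0 ≤ m)
    (hL : ρ ^ 2 = qu * (1 + qv) ^ 2 + qv * (1 + qu) ^ 2 - 2 * k * (1 + qu) * (1 + qv))
    (hA : A = 2 * (qu * (1 + qv) - k * (1 + qu)))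
    (hB : B = 2 * (k * (1 + qv) - qv * (1 + qu)))
    (ha : a = A / ((1 - qu) * ρ)) (hb : b = B / ((1 - qv) * ρ))
    (hX : X = 1 + 2 * m / ((1 - qu) * (1 - qv))) :
    Real.arsinh a - Real.arsinh b = _root_.arcosh X := by
  have hcu : (0:ℝ) < 1 - qu := by linarith
  have hcv : (0:ℝ) < 1 - qv := by linarith
  have hD : (0:ℝ) < (1 - qu) * (1 - qv) := mul_pos hcu hcv
  have hX1 : (1:ℝ) ≤ X := by
    rw [hX]
    have : (0:ℝ) ≤ 2 * m / ((1 - qu) * (1 - qv)) := by positivity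
    linarith
  set Y := (1 - qu) * (1 - qv) + 2 * m with hY
  have hY0 : 0 < Y := by rw [hY]; linarith
  -- the two cleared polynomial identities (3 variables)
  have hpoly : ((1 - qu) ^ 2 * ρ ^ 2 + A ^ 2) * ((1 - qv) ^ 2 * ρ ^ 2 + B ^ 2)
      = (Y * ρ ^ 2 + A * B) ^ 2 := by
    rw [hY, hL, hA, hB, hm]; ring
  have hfac : (2 * m * ρ ^ 2 + 2 * (A * B)) * (Y + (1 - qu) * (1 - qv))
      = (A * (1 - qv) + B * (1 - qu)) ^ 2 := by
    rw [hY, hL, hA, hB, hm]; ring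
  have hABm : 0 ≤ 2 * m * ρ ^ 2 + 2 * (A * B) := by
    have h1 : 0 < Y + (1 - qu) * (1 - qv) := by linarith
    nlinarith [sq_nonneg (A * (1 - qv) + B * (1 - qu))]
  have hρ2 : (0:ℝ) < ρ ^ 2 := by positivity
  have hYAB : 0 ≤ Y * ρ ^ 2 + A * B := by nlinarith
  -- positivity of the factors
  have hP0 : (0:ℝ) < (1 - qu) ^ 2 * ρ ^ 2 + A ^ 2 := by positivity
  have hQ0 : (0:ℝ) < (1 - qv) ^ 2 * ρ ^ 2 + B ^ 2 := by positivity
  -- sqrt computations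
  have e1 : Real.sqrt (1 + a ^ 2) = Real.sqrt ((1 - qu) ^ 2 * ρ ^ 2 + A ^ 2) / ((1 - qu) * ρ) := by
    rw [ha]
    have h2 : 1 + (A / ((1 - qu) * ρ)) ^ 2
        = ((1 - qu) ^ 2 * ρ ^ 2 + A ^ 2) / ((1 - qu) * ρ) ^ 2 := by
      field_simp
    rw [h2, Real.sqrt_div hP0.le, Real.sqrt_sq (by positivity)]
  have e2 : Real.sqrt (1 + b ^ 2) = Real.sqrt ((1 - qv) ^ 2 * ρ ^ 2 + B ^ 2) / ((1 - qv) * ρ) := by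
    rw [hb]
    have h2 : 1 + (B / ((1 - qv) * ρ)) ^ 2
        = ((1 - qv) ^ 2 * ρ ^ 2 + B ^ 2) / ((1 - qv) * ρ) ^ 2 := by
      field_simp
    rw [h2, Real.sqrt_div hQ0.le, Real.sqrt_sq (by positivity)]
  have hprod : Real.sqrt (1 + a ^ 2) * Real.sqrt (1 + b ^ 2)
      = (Y * ρ ^ 2 + A * B) / ((1 - qu) * (1 - qv) * ρ ^ 2) := by
    rw [e1, e2, div_mul_div_comm, ← Real.sqrt_mul hP0.le, hpoly, Real.sqrt_sq hYAB]
    congr 1; ring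
  -- b ≤ a
  have hkey : A * (1 - qv) - B * (1 - qu) = 2 * m * (1 - qu * qv) := by
    rw [hA, hB, hm]; ring
  have hba : b ≤ a := by
    rw [ha, hb, div_le_div_iff₀ (by positivity) (by positivity)]
    have hquv : (0:ℝ) ≤ 1 - qu * qv := by nlinarith
    have h7 : 0 ≤ 2 * m * (1 - qu * qv) * ρ := by positivity
    have h8 : (A * (1 - qv) - B * (1 - qu)) * ρ = 2 * m * (1 - qu * qv) * ρ := by rw [hkey]
    nlinarith [h7, h8]
  have hy : 0 ≤ Real.arsinh a - Real.arsinh b := by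
    have := Real.arsinh_le_arsinh.mpr hba
    linarith
  have hcosh : Real.cosh (Real.arsinh a - Real.arsinh b) = X := by
    rw [Real.cosh_sub, Real.cosh_arsinh, Real.cosh_arsinh, Real.sinh_arsinh, Real.sinh_arsinh,
      hprod, ha, hb, hX, hY]
    field_simp
    ring
  rw [← hcosh, _root_.arcosh_cosh hy]

lemma Sf_add_pi {u : ℂ} (hu : ‖u‖ < 1) (θ : ℝ) : Sf u (θ + π) = - Sf u θ := by
  have hd : Real.sqrt ((1 - ‖u‖ ^ 2) ^ 2
      + 4 * (u.im * Real.cos θ - u.re * Real.sin θ) ^ 2) ≠ 0 :=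
    ne_of_gt (Real.sqrt_pos.mpr (Sf_den_pos hu θ))
  have h1 : Real.sqrt ((1 - ‖u‖ ^ 2) ^ 2
      + 4 * (u.im * Real.cos (θ + π) - u.re * Real.sin (θ + π)) ^ 2)
      = Real.sqrt ((1 - ‖u‖ ^ 2) ^ 2
      + 4 * (u.im * Real.cos θ - u.re * Real.sin θ) ^ 2) := by
    congr 1
    rw [Real.cos_add, Real.sin_add, Real.cos_pi, Real.sin_pi]; ring
  unfold Sf
  rw [h1, Real.cos_add, Real.sin_add, Real.cos_pi, Real.sin_pi]
  field_simp
  ring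

lemma Tf_add_pi {u : ℂ} (hu : ‖u‖ < 1) (θ : ℝ) : Tf u (θ + π) = - Tf u θ := by
  have hq : (1:ℝ) - ‖u‖ ^ 2 ≠ 0 := ne_of_gt (by linarith [q_lt_one hu])
  unfold Tf
  rw [← Real.arsinh_neg]
  congr 1
  rw [Real.cos_add, Real.sin_add, Real.cos_pi, Real.sin_pi]
  field_simp
  ring

lemma Sf_add_two_pi {u : ℂ} (hu : ‖u‖ < 1) (θ : ℝ) : Sf u (θ + 2 * π) = Sf u θ := by
  rw [show θ + 2 * π = θ + π + π by ring, Sf_add_pi hu, Sf_add_pi hu, neg_neg]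

theorem crofton (u v : ℂ) (hu : ‖u‖ < 1) (hv : ‖v‖ < 1) :
    ∫ θ in (0:ℝ)..(2 * π), |Sf u θ - Sf v θ| = 4 * poincareDist u v := by
  rcases eq_or_ne u v with rfl | hne
  · simp [poincareDist, _root_.arcosh]
  have hqu := q_lt_one hu
  have hqv := q_lt_one hv
  have hqu0 : (0:ℝ) ≤ ‖u‖ ^ 2 := by positivity
  have hqv0 : (0:ℝ) ≤ ‖v‖ ^ 2 := by positivity
  set qu := ‖u‖ ^ 2 with hqud
  set qv := ‖v‖ ^ 2 with hqvd
  set w : ℂ := u * ((1 + qv : ℝ) : ℂ) - v * ((1 + qu : ℝ) : ℂ) with hwd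
  have hw : w ≠ 0 := by
    intro h0
    have h1 : u * ((1 + qv : ℝ) : ℂ) = v * ((1 + qu : ℝ) : ℂ) := by
      rw [hwd] at h0; linear_combination h0
    have h2 : ‖u‖ * (1 + qv) = ‖v‖ * (1 + qu) := by
      have := congrArg (‖·‖) h1
      rwa [norm_mul, norm_mul, Complex.norm_real, Complex.norm_real, Real.norm_eq_abs, Real.norm_eq_abs,
        abs_of_pos (by linarith : (0:ℝ) < 1 + qv), abs_of_pos (by linarith : (0:ℝ) < 1 + qu)]
        at this
    have hab : ‖u‖ = ‖v‖ := by
      have h3 : (‖u‖ - ‖v‖) * (1 - ‖u‖ * ‖v‖) = 0 := by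
        rw [hqud, hqvd] at h2; linear_combination h2
      rcases mul_eq_zero.mp h3 with h4 | h4
      · linarith
      · exfalso
        have h5 : ‖u‖ * ‖v‖ < 1 := by nlinarith [norm_nonneg u, norm_nonneg v]
        linarith
    have hq : qu = qv := by rw [hqud, hqvd, hab]
    apply hne
    have h6 : u * ((1 + qv : ℝ) : ℂ) = v * ((1 + qv : ℝ) : ℂ) := by rw [← hq] at h1 ⊢; exact h1
    have h7 : ((1 + qv : ℝ) : ℂ) ≠ 0 := by
      simp only [ne_eq, Complex.ofReal_eq_zero]
      intro h; linarith
    exact mul_right_cancel₀ h7 h6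
  set ρ := ‖w‖ with hρd
  have hρ : 0 < ρ := norm_pos_iff.mpr hw
  set φ := Complex.arg w with hφd
  have hwre : w.re = u.re * (1 + qv) - v.re * (1 + qu) := by
    rw [hwd]; simp [Complex.sub_re, Complex.mul_re]
  have hwim : w.im = u.im * (1 + qv) - v.im * (1 + qu) := by
    rw [hwd]; simp [Complex.sub_im, Complex.mul_im]
  have hcosφ : Real.cos φ = w.re / ρ := Complex.cos_arg hw
  have hsinφ : Real.sin φ = w.im / ρ := Complex.sin_arg w
  set θ₁ := φ - π / 2 with hθ₁
  have hsinθ₁ : Real.sin θ₁ = - (w.re / ρ) := by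
    rw [hθ₁, Real.sin_sub, Real.sin_pi_div_two, Real.cos_pi_div_two, hcosφ]; ring
  have hcosθ₁ : Real.cos θ₁ = w.im / ρ := by
    rw [hθ₁, Real.cos_sub, Real.sin_pi_div_two, Real.cos_pi_div_two, hsinφ]; ring
  -- sign of the integrand on [θ₁, θ₁ + π]
  have hsign : ∀ θ ∈ Set.Icc θ₁ (θ₁ + π), Sf v θ ≤ Sf u θ := by
    intro θ hθ
    apply Sf_le_Sf hu hv
    have h8 : (u.re * (1 + qv) - v.re * (1 + qu)) * Real.cos θ
        + (u.im * (1 + qv) - v.im * (1 + qu)) * Real.sin θ = ρ * Real.sin (θ - θ₁) := by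
      rw [← hwre, ← hwim]
      have e : θ - θ₁ = θ - θ₁ := rfl
      have h9 : Real.sin (θ - θ₁) = Real.sin θ * Real.cos θ₁ - Real.cos θ * Real.sin θ₁ :=
        Real.sin_sub θ θ₁
      rw [h9, hsinθ₁, hcosθ₁]
      field_simp
      ring
    rw [h8]
    apply mul_nonneg hρ.le
    apply Real.sin_nonneg_of_nonneg_of_le_pi <;> [linarith [hθ.1]; linarith [hθ.2]]
  -- integrability and periodicity
  have hcont : Continuous fun θ => |Sf u θ - Sf v θ| :=
    ((continuous_Sf hu).sub (continuous_Sf hv)).abs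
  have hper : Function.Periodic (fun θ => |Sf u θ - Sf v θ|) (2 * π) := by
    intro θ; simp only [Sf_add_two_pi hu, Sf_add_two_pi hv]
  -- shift the integration interval
  have step1 : ∫ θ in (0:ℝ)..(2 * π), |Sf u θ - Sf v θ|
      = ∫ θ in θ₁..(θ₁ + 2 * π), |Sf u θ - Sf v θ| := by
    have := hper.intervalIntegral_add_eq 0 θ₁
    rw [zero_add] at this
    exact this
  -- split into two half-periods
  have hint : ∀ a b : ℝ, IntervalIntegrable (fun θ => |Sf u θ - Sf v θ|) volume a b :=
    fun a b => hcont.intervalIntegrable a b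
  have step2 : ∫ θ in θ₁..(θ₁ + 2 * π), |Sf u θ - Sf v θ|
      = (∫ θ in θ₁..(θ₁ + π), |Sf u θ - Sf v θ|)
        + ∫ θ in (θ₁ + π)..(θ₁ + 2 * π), |Sf u θ - Sf v θ| :=
    (intervalIntegral.integral_add_adjacent_intervals (hint _ _) (hint _ _)).symm
  have step3 : ∫ θ in (θ₁ + π)..(θ₁ + 2 * π), |Sf u θ - Sf v θ|
      = ∫ θ in θ₁..(θ₁ + π), |Sf u θ - Sf v θ| := by
    have h10 := intervalIntegral.integral_comp_add_right (a := θ₁) (b := θ₁ + π)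
      (fun θ => |Sf u θ - Sf v θ|) π
    rw [show θ₁ + π + π = θ₁ + 2 * π by ring] at h10
    rw [← h10]
    apply intervalIntegral.integral_congr
    intro θ _
    simp only
    rw [Sf_add_pi hu, Sf_add_pi hv, show -Sf u θ - -Sf v θ = -(Sf u θ - Sf v θ) by ring, abs_neg]
  have step4 : ∫ θ in θ₁..(θ₁ + π), |Sf u θ - Sf v θ|
      = ∫ θ in θ₁..(θ₁ + π), (Sf u θ - Sf v θ) := by
    apply intervalIntegral.integral_congr
    intro θ hθ
    rw [Set.uIcc_of_le (by linarith [Real.pi_pos] : θ₁ ≤ θ₁ + π)] at hθ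
    exact abs_of_nonneg (by linarith [hsign θ hθ])
  have step5 : ∫ θ in θ₁..(θ₁ + π), (Sf u θ - Sf v θ)
      = (Tf u (θ₁ + π) - Tf v (θ₁ + π)) - (Tf u θ₁ - Tf v θ₁) := by
    exact intervalIntegral.integral_eq_sub_of_hasDerivAt
      (f := fun θ => Tf u θ - Tf v θ)
      (fun θ _ => (hasDerivAt_Tf hu θ).sub (hasDerivAt_Tf hv θ))
      (((continuous_Sf hu).sub (continuous_Sf hv)).intervalIntegrable _ _)
  have step6 : (Tf u (θ₁ + π) - Tf v (θ₁ + π)) - (Tf u θ₁ - Tf v θ₁)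
      = -2 * (Tf u θ₁ - Tf v θ₁) := by
    rw [Tf_add_pi hu, Tf_add_pi hv]; ring
  -- evaluate Tf at θ₁
  have hq1u : (0:ℝ) < 1 - qu := by linarith
  have hq1v : (0:ℝ) < 1 - qv := by linarith
  have hTu : Tf u θ₁ = - Real.arsinh (2 * (u.re * w.re + u.im * w.im) / ((1 - qu) * ρ)) := by
    rw [Tf, ← Real.arsinh_neg, ← hqud]
    congr 1
    rw [hsinθ₁, hcosθ₁]
    field_simp
    ring
  have hTv : Tf v θ₁ = - Real.arsinh (2 * (v.re * w.re + v.im * w.im) / ((1 - qv) * ρ)) := by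
    rw [Tf, ← Real.arsinh_neg, ← hqvd]
    congr 1
    rw [hsinθ₁, hcosθ₁]
    field_simp
    ring
  -- the main algebraic identity
  have halg : Real.arsinh (2 * (u.re * w.re + u.im * w.im) / ((1 - qu) * ρ))
      - Real.arsinh (2 * (v.re * w.re + v.im * w.im) / ((1 - qv) * ρ))
      = _root_.arcosh (1 + 2 * ((u.re - v.re) ^ 2 + (u.im - v.im) ^ 2) / ((1 - qu) * (1 - qv))) := by
    have hsqu : qu = u.re ^ 2 + u.im ^ 2 := by rw [hqud, sqabs]
    have hsqv : qv = v.re ^ 2 + v.im ^ 2 := by rw [hqvd, sqabs]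
    apply main_alg qu qv (u.re * v.re + u.im * v.im)
      ((u.re - v.re) ^ 2 + (u.im - v.im) ^ 2) ρ
      (2 * (u.re * w.re + u.im * w.im)) (2 * (v.re * w.re + v.im * w.im)) _ _ _
      hqu hqv hqu0 hqv0 hρ
    · rw [hsqu, hsqv]; ring
    · positivity
    · rw [hρd, sqabs, hwre, hwim, hsqu, hsqv]; ring
    · rw [hwre, hwim, hsqu, hsqv]; ring
    · rw [hwre, hwim, hsqu, hsqv]; ring
    · rfl
    · rfl
    · rfl
  -- the distance in coordinates
  have hdist : poincareDist u v
      = _root_.arcosh (1 + 2 * ((u.re - v.re) ^ 2 + (u.im - v.im) ^ 2) / ((1 - qu) * (1 - qv))) := by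
    unfold poincareDist
    rw [← hqud, ← hqvd]
    congr 3
    rw [sqabs, Complex.sub_re, Complex.sub_im]
  rw [step1, step2, step3, step4, step5, step6, hTu, hTv, hdist, ← halg]
  ring

lemma sinh_arcosh {y : ℝ} (hy : 1 ≤ y) : Real.sinh (_root_.arcosh y) = Real.sqrt (y ^ 2 - 1) := by
  unfold _root_.arcosh
  set s := Real.sqrt (y ^ 2 - 1) with hs
  have hs0 : 0 ≤ s := Real.sqrt_nonneg _
  have hs2 : s ^ 2 = y ^ 2 - 1 := Real.sq_sqrt (by nlinarith)
  have ht : 0 < y + s := by nlinarith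
  rw [Real.sinh_eq, Real.exp_log ht, Real.exp_neg, Real.exp_log ht]
  rw [div_eq_iff (by norm_num : (2:ℝ) ≠ 0)]
  field_simp
  linarith [hs2]

lemma abs_Sf_le {u : ℂ} {R : ℝ} (hu : ‖u‖ < 1) (hd : poincareDist 0 u ≤ R) (θ : ℝ) :
    |Sf u θ| ≤ Real.sinh R := by
  have hq := q_lt_one hu
  have hq0 : (0:ℝ) ≤ ‖u‖ ^ 2 := by positivity
  set q := ‖u‖ ^ 2 with hqd
  have h1q : (0:ℝ) < 1 - q := by linarith
  -- step A : |Sf u θ| ≤ 2 |u| / (1-q)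
  set x := u.re * Real.cos θ + u.im * Real.sin θ with hx
  set y := u.im * Real.cos θ - u.re * Real.sin θ with hy
  have hp : x ^ 2 + y ^ 2 = q := pyth u θ
  have hDpos : 0 < (1 - q) ^ 2 + 4 * y ^ 2 := Sf_den_pos hu θ
  have hM0 : 0 ≤ 2 * ‖u‖ / (1 - q) := by positivity
  have hA : |Sf u θ| ≤ 2 * ‖u‖ / (1 - q) := by
    rw [← Real.sqrt_sq_eq_abs]
    have hsq : Sf u θ ^ 2 = 4 * x ^ 2 / ((1 - q) ^ 2 + 4 * y ^ 2) := by
      rw [Sf, ← hx, ← hy, div_pow, Real.sq_sqrt hDpos.le]; ring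
    have hsq2 : Sf u θ ^ 2 ≤ (2 * ‖u‖ / (1 - q)) ^ 2 := by
      rw [hsq, div_pow, div_le_div_iff₀ hDpos (by positivity)]
      have habs2 : ‖u‖ ^ 2 = q := hqd.symm
      nlinarith [hp, sq_nonneg y, sq_nonneg (x * y), h1q, sq_nonneg ((1 - q) * x)]
    calc Real.sqrt (Sf u θ ^ 2) ≤ Real.sqrt ((2 * ‖u‖ / (1 - q)) ^ 2) :=
          Real.sqrt_le_sqrt hsq2
      _ = 2 * ‖u‖ / (1 - q) := Real.sqrt_sq hM0
  -- step B : 2 |u| / (1-q) = sinh (poincareDist 0 u) ≤ sinh R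
  have hd0 : poincareDist 0 u = _root_.arcosh ((1 + q) / (1 - q)) := by
    unfold poincareDist
    congr 1
    rw [zero_sub, norm_neg, ← hqd]
    have : ‖(0:ℂ)‖ = 0 := by simp
    rw [this]
    field_simp
    ring
  have hy1 : (1:ℝ) ≤ (1 + q) / (1 - q) := by
    rw [le_div_iff₀ h1q]; linarith
  have hB : 2 * ‖u‖ / (1 - q) = Real.sinh (poincareDist 0 u) := by
    rw [hd0, _root_.sinh_arcosh hy1]
    have h2 : ((1 + q) / (1 - q)) ^ 2 - 1 = (2 * ‖u‖ / (1 - q)) ^ 2 := by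
      have habs2 : ‖u‖ ^ 2 = q := hqd.symm
      field_simp
      linear_combination (4 : ℝ) * habs2
    rw [h2, Real.sqrt_sq hM0]
  have hmono : Real.sinh (poincareDist 0 u) ≤ Real.sinh R := Real.sinh_le_sinh.mpr hd
  linarith

set_option maxHeartbeats 1000000 in
/-- Theorem 1.4: an `(r, cr, p₁, p₂)`-sensitive LSH family for the hyperbolic
plane (Poincaré disk, points within hyperbolic distance `R` of the origin), with
`p₁ = 1 - r/(π sinh R)`, `p₂ = 1 - cr/(π sinh R)` and exponent
`log(1/p₁)/log(1/p₂) ≤ 1/c`. -/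
theorem lsh_hyperbolic_plane (r c R : ℝ) (hr : 0 < r) (hc : 1 < c) (hR : 0 < R)
    (hcrR : c * r < π * Real.sinh R) :
    (0 < 1 - c * r / (π * Real.sinh R)) ∧
    (1 - c * r / (π * Real.sinh R) < 1 - r / (π * Real.sinh R)) ∧
    (1 - r / (π * Real.sinh R) < 1) ∧
    ∃ (μ : Measure (ℝ × ℝ)) (_ : IsProbabilityMeasure μ) (H : ℝ × ℝ → ℂ → Bool),
      (∀ u v : ℂ, ‖u‖ < 1 → ‖v‖ < 1 →
        poincareDist 0 u ≤ R → poincareDist 0 v ≤ R →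
          (poincareDist u v ≤ r →
            μ {ω | H ω u = H ω v} ≥ ENNReal.ofReal (1 - r / (π * Real.sinh R))) ∧
          (poincareDist u v ≥ c * r →
            μ {ω | H ω u = H ω v} ≤ ENNReal.ofReal (1 - c * r / (π * Real.sinh R)))) ∧
      Real.log (1 / (1 - r / (π * Real.sinh R))) /
        Real.log (1 / (1 - c * r / (π * Real.sinh R))) ≤ 1 / c := by
  have hS : 0 < Real.sinh R := Real.sinh_pos_iff.mpr hR
  have hπS : 0 < π * Real.sinh R := by positivity
  have hx0 : 0 < r / (π * Real.sinh R) := by positivity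
  have hcx1 : c * r / (π * Real.sinh R) < 1 := (div_lt_one hπS).mpr hcrR
  have hxcx : r / (π * Real.sinh R) < c * r / (π * Real.sinh R) :=
    (div_lt_div_iff_of_pos_right hπS).mpr (by nlinarith)
  refine ⟨by linarith, by linarith, by linarith, ?_⟩
  set S := Real.sinh R with hSd
  set Box : Set (ℝ × ℝ) := Set.Ioc (0:ℝ) (2 * π) ×ˢ Set.Icc (-S) S with hBoxd
  have hvolBox : volume Box = ENNReal.ofReal (4 * π * S) := by
    rw [hBoxd, Measure.volume_eq_prod ℝ ℝ, Measure.prod_prod, Real.volume_Ioc, Real.volume_Icc,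
      ← ENNReal.ofReal_mul (by linarith [Real.pi_pos] : (0:ℝ) ≤ 2 * π - 0)]
    congr 1; ring
  have hc0 : ENNReal.ofReal (4 * π * S) ≠ 0 := by
    simp only [ne_eq, ENNReal.ofReal_eq_zero, not_le]; positivity
  set μ' : Measure (ℝ × ℝ) := (ENNReal.ofReal (4 * π * S))⁻¹ • (volume.restrict Box) with hμ'd
  have hprob : μ' Set.univ = 1 := by
    rw [hμ'd, Measure.smul_apply, Measure.restrict_apply MeasurableSet.univ, Set.univ_inter,
      hvolBox, smul_eq_mul, ENNReal.inv_mul_cancel hc0 ENNReal.ofReal_ne_top]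
  refine ⟨μ', ⟨hprob⟩, fun ω z => decide (ω.2 < Sf z ω.1), ?_, ?_⟩
  · intro u v hu hv hdu hdv
    have hbu : ∀ θ, |Sf u θ| ≤ S := fun θ => abs_Sf_le hu hdu θ
    have hbv : ∀ θ, |Sf v θ| ≤ S := fun θ => abs_Sf_le hv hdv θ
    set U : Set (ℝ × ℝ) := {ω | ω.2 < Sf u ω.1} with hUd
    set V : Set (ℝ × ℝ) := {ω | ω.2 < Sf v ω.1} with hVd
    have hmU : MeasurableSet U := measurableSet_lt measurable_snd
      ((continuous_Sf hu).measurable.comp measurable_fst)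
    have hmV : MeasurableSet V := measurableSet_lt measurable_snd
      ((continuous_Sf hv).measurable.comp measurable_fst)
    have hSepM : MeasurableSet ((U \ V) ∪ (V \ U)) := (hmU.diff hmV).union (hmV.diff hmU)
    have hCollEq : {ω : ℝ × ℝ | (fun (ω : ℝ × ℝ) z => decide (ω.2 < Sf z ω.1)) ω u
        = (fun (ω : ℝ × ℝ) z => decide (ω.2 < Sf z ω.1)) ω v} = ((U \ V) ∪ (V \ U))ᶜ := by
      ext ω
      simp only [Set.mem_setOf_eq, decide_eq_decide, Set.mem_compl_iff, Set.mem_union,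
        Set.mem_diff, hUd, hVd, Set.mem_setOf_eq]
      tauto
    set f : ℝ → ℝ := fun θ => min (Sf u θ) (Sf v θ) with hfd
    set g : ℝ → ℝ := fun θ => max (Sf u θ) (Sf v θ) with hgd
    have hcontf : Continuous f := (continuous_Sf hu).min (continuous_Sf hv)
    have hcontg : Continuous g := (continuous_Sf hu).max (continuous_Sf hv)
    set E : Set (ℝ × ℝ) :=
      (Prod.fst ⁻¹' Set.Ioc (0:ℝ) (2 * π)) ∩ ({p | f p.1 ≤ p.2} ∩ {p | p.2 < g p.1}) with hEd
    have hEmeas : MeasurableSet E := by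
      refine (measurableSet_Ioc.preimage measurable_fst).inter (MeasurableSet.inter ?_ ?_)
      · exact measurableSet_le (hcontf.measurable.comp measurable_fst) measurable_snd
      · exact measurableSet_lt measurable_snd (hcontg.measurable.comp measurable_fst)
    have hSepBox : ((U \ V) ∪ (V \ U)) ∩ Box = E := by
      ext ⟨θ, s⟩
      simp only [hEd, Set.mem_inter_iff, Set.mem_union, Set.mem_diff, hUd, hVd,
        Set.mem_setOf_eq, hBoxd, Set.mem_prod, Set.mem_Ioc, Set.mem_Icc, Set.mem_preimage,
        hfd, hgd]
      constructor
      · rintro ⟨h1 | h1, h2, _⟩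
        · exact ⟨h2, le_trans (min_le_right _ _) (not_lt.mp h1.2),
            lt_of_lt_of_le h1.1 (le_max_left _ _)⟩
        · exact ⟨h2, le_trans (min_le_left _ _) (not_lt.mp h1.2),
            lt_of_lt_of_le h1.1 (le_max_right _ _)⟩
      · rintro ⟨h2, h3, h4⟩
        have hmS : -S ≤ s := le_trans (le_min (by linarith [(abs_le.mp (hbu θ)).1])
          (by linarith [(abs_le.mp (hbv θ)).1])) h3
        have hsS : s ≤ S := le_of_lt (lt_of_lt_of_le h4
          (max_le (abs_le.mp (hbu θ)).2 (abs_le.mp (hbv θ)).2))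
        refine ⟨?_, h2, hmS, hsS⟩
        rcases le_total (Sf u θ) (Sf v θ) with h5 | h5
        · right
          rw [min_eq_left h5] at h3
          rw [max_eq_right h5] at h4
          exact ⟨h4, not_lt.mpr h3⟩
        · left
          rw [min_eq_right h5] at h3
          rw [max_eq_left h5] at h4
          exact ⟨h4, not_lt.mpr h3⟩
    -- Fubini computation of the volume of E
    have hslicevol : ∀ θ : ℝ, volume (Prod.mk θ ⁻¹' E)
        = (Set.Ioc (0:ℝ) (2 * π)).indicator (fun θ => ENNReal.ofReal (g θ - f θ)) θ := by
      intro θ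
      by_cases hθ : θ ∈ Set.Ioc (0:ℝ) (2 * π)
      · have he : Prod.mk θ ⁻¹' E = Set.Ico (f θ) (g θ) := by
          ext s
          simp [hEd, hθ, Set.mem_Ico, and_comm]
        rw [he, Real.volume_Ico, Set.indicator_of_mem hθ]
      · have he : Prod.mk θ ⁻¹' E = ∅ := by
          ext s
          simp [hEd, hθ]
        rw [he, measure_empty, Set.indicator_of_notMem hθ]
    have hInt : MeasureTheory.IntegrableOn (fun θ => g θ - f θ) (Set.Ioc (0:ℝ) (2 * π)) volume :=
      (hcontg.sub hcontf).integrableOn_Ioc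
    have hvolE : volume E = ENNReal.ofReal (∫ θ in Set.Ioc (0:ℝ) (2 * π), (g θ - f θ)) := by
      rw [Measure.volume_eq_prod ℝ ℝ, Measure.prod_apply hEmeas,
        lintegral_congr hslicevol, lintegral_indicator measurableSet_Ioc,
        ← ofReal_integral_eq_lintegral_ofReal hInt
          (Filter.Eventually.of_forall (fun θ => sub_nonneg.mpr (min_le_max)))]
    have h4d : ∫ θ in Set.Ioc (0:ℝ) (2 * π), (g θ - f θ) = 4 * poincareDist u v := by
      have e1 : ∫ θ in Set.Ioc (0:ℝ) (2 * π), (g θ - f θ)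
          = ∫ θ in (0:ℝ)..(2 * π), (g θ - f θ) :=
        (intervalIntegral.integral_of_le (by positivity : (0:ℝ) ≤ 2 * π)).symm
      have e2 : ∫ θ in (0:ℝ)..(2 * π), (g θ - f θ)
          = ∫ θ in (0:ℝ)..(2 * π), |Sf u θ - Sf v θ| :=
        intervalIntegral.integral_congr (fun θ _ => by
          rw [hgd, hfd]; exact (max_sub_min_eq_abs _ _).trans (abs_sub_comm _ _))
      rw [e1, e2]
      exact crofton u v hu hv
    have hμSep : μ' ((U \ V) ∪ (V \ U)) = ENNReal.ofReal (poincareDist u v / (π * S)) := by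
      rw [hμ'd, Measure.smul_apply, Measure.restrict_apply hSepM, hSepBox, hvolE, h4d,
        smul_eq_mul, ← ENNReal.div_eq_inv_mul,
        ← ENNReal.ofReal_div_of_pos (by positivity : (0:ℝ) < 4 * π * S)]
      congr 1
      rw [div_eq_div_iff (by positivity) (by positivity)]
      ring
    have hμColl : μ' {ω : ℝ × ℝ | (fun (ω : ℝ × ℝ) z => decide (ω.2 < Sf z ω.1)) ω u
        = (fun (ω : ℝ × ℝ) z => decide (ω.2 < Sf z ω.1)) ω v}
        = 1 - ENNReal.ofReal (poincareDist u v / (π * S)) := by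
      rw [hCollEq, measure_compl hSepM (by rw [hμSep]; exact ENNReal.ofReal_ne_top), hprob, hμSep]
    constructor
    · intro hle
      rw [ge_iff_le, hμColl]
      have e3 : ENNReal.ofReal (1 - r / (π * S)) = 1 - ENNReal.ofReal (r / (π * S)) := by
        rw [ENNReal.ofReal_sub _ (by positivity), ENNReal.ofReal_one]
      rw [e3]
      exact tsub_le_tsub_left (ENNReal.ofReal_le_ofReal (by gcongr)) 1
    · intro hge
      rw [hμColl]
      have e3 : ENNReal.ofReal (1 - c * r / (π * S)) = 1 - ENNReal.ofReal (c * r / (π * S)) := by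
        rw [ENNReal.ofReal_sub _ (by positivity), ENNReal.ofReal_one]
      rw [e3]
      exact tsub_le_tsub_left (ENNReal.ofReal_le_ofReal (by gcongr)) 1
  · -- the exponent bound
    set x := r / (π * S) with hxd
    have hfold : c * r / (π * S) = c * x := by rw [hxd]; ring
    have hx1 : x < 1 := lt_trans hxcx hcx1
    have hcx1' : c * x < 1 := by rw [← hfold]; exact hcx1
    have hcx0 : 0 < c * x := by positivity
    have hbern : 1 - c * x ≤ (1 - x) ^ c := by
      have hb := one_add_mul_self_le_rpow_one_add (by linarith : (-1:ℝ) ≤ -x) (le_of_lt hc)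
      have e1 : 1 + c * (-x) = 1 - c * x := by ring
      have e2 : 1 + (-x) = 1 - x := by ring
      rw [e1, e2] at hb
      exact hb
    have hlog : Real.log (1 - c * x) ≤ c * Real.log (1 - x) := by
      calc Real.log (1 - c * x) ≤ Real.log ((1 - x) ^ c) :=
            Real.log_le_log (by linarith) hbern
        _ = c * Real.log (1 - x) := Real.log_rpow (by linarith) c
    have hlp2 : 0 < -Real.log (1 - c * x) := by
      have := Real.log_neg (by linarith : (0:ℝ) < 1 - c * x) (by linarith : 1 - c * x < 1)
      linarith
    rw [hfold, one_div (1 - x), one_div (1 - c * x), Real.log_inv, Real.log_inv,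
      div_le_div_iff₀ hlp2 (by positivity : (0:ℝ) < c)]
    linarith
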